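/- Let G be the subgroup of GL(4,ℝ) generated by A = [[1,0,0,0],[0,1,0,0],[0,0,1,0],[√2−1,1,0,1]] and B = [[1,0,0,0],[0,1,0,0],[0,0,1,0],[1,0,0,1]], and let u = (1,1,0,0) and v = (1,1,0,√3). Then: (i) v belongs to closure(G(u)) but not to G(u); (ii) there exists a sequence (B_m)_{m∈ℕ} in G that is unbounded (the norms ‖B_m‖ are not bounded above) and satisfies lim_{m→∞} B_m u = v. -/

import Mathlib

open Matrix Filter Topology
noncomputable section
noncomputable section

def Em (a b : ℝ) : Matrix (Fin 4) (Fin 4) ℝ := !![1,0,0,0;0,1,0,0;0,0,1,0;a,b,0,1]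

lemma Em_mul (a b c d : ℝ) : Em a b * Em c d = Em (a+c) (b+d) := by
  ext i j
  fin_cases i <;> fin_cases j <;>
    simp [Em, Matrix.mul_apply, Fin.sum_univ_succ]

lemma Em_zero : Em 0 0 = 1 := by
  ext i j; fin_cases i <;> fin_cases j <;>
    simp [Em, Matrix.one_apply, Matrix.vecHead, Matrix.vecTail]

def EG (a b : ℝ) : Matrix.GeneralLinearGroup (Fin 4) ℝ :=
  ⟨Em a b, Em (-a) (-b),
    by rw [Em_mul]; simpa using Em_zero,
    by rw [Em_mul]; simpa using Em_zero⟩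

lemma EG_coe (a b : ℝ) :
    ((EG a b : Matrix.GeneralLinearGroup (Fin 4) ℝ) : Matrix (Fin 4) (Fin 4) ℝ) = Em a b := rfl

lemma EG_mul (a b c d : ℝ) : EG a b * EG c d = EG (a+c) (b+d) :=
  Units.ext (Em_mul a b c d)

lemma EG_one : EG 0 0 = 1 := Units.ext Em_zero

lemma EG_inv (a b : ℝ) : (EG a b)⁻¹ = EG (-a) (-b) := by
  rw [inv_eq_iff_mul_eq_one, EG_mul]
  simpa using EG_one

lemma EG_pow (a b : ℝ) (k : ℕ) : (EG a b) ^ k = EG (k*a) (k*b) := by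
  induction k with
  | zero => simpa using EG_one.symm
  | succ k ih => rw [pow_succ, ih, EG_mul]; push_cast; ring_nf

lemma EG_zpow (a b : ℝ) (k : ℤ) : (EG a b) ^ k = EG (k*a) (k*b) := by
  cases k with
  | ofNat k => simpa using EG_pow a b k
  | negSucc k =>
      rw [zpow_negSucc, EG_pow, EG_inv]
      norm_num
      ring_nf



/-- The matrix `A = [[1,0,0,0],[0,1,0,0],[0,0,1,0],[√2−1,1,0,1]]` as an element of `GL(4, ℝ)`. -/
noncomputable def Aex : Matrix.GeneralLinearGroup (Fin 4) ℝ :=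
  Matrix.GeneralLinearGroup.mkOfDetNeZero
    !![1,0,0,0;0,1,0,0;0,0,1,0;Real.sqrt 2 - 1,1,0,1]
    (by simp [Matrix.det_succ_row_zero, Fin.sum_univ_succ])

/-- The matrix `B = [[1,0,0,0],[0,1,0,0],[0,0,1,0],[1,0,0,1]]` as an element of `GL(4, ℝ)`. -/
noncomputable def Bex : Matrix.GeneralLinearGroup (Fin 4) ℝ :=
  Matrix.GeneralLinearGroup.mkOfDetNeZero !![1,0,0,0;0,1,0,0;0,0,1,0;1,0,0,1]
    (by simp [Matrix.det_succ_row_zero, Fin.sum_univ_succ])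

/-- The subgroup of `GL(4, ℝ)` generated by `A` and `B`. -/
noncomputable def Gex : Subgroup (Matrix.GeneralLinearGroup (Fin 4) ℝ) :=
  Subgroup.closure {Aex, Bex}



lemma Aex_eq : Aex = EG (Real.sqrt 2 - 1) 1 := Units.ext rfl
lemma Bex_eq : Bex = EG 1 0 := Units.ext rfl

lemma mem_Gex (m n : ℤ) : EG (m*(Real.sqrt 2 - 1)+n) m ∈ Gex := by
  have hA : Aex ∈ Gex := Subgroup.subset_closure (by simp)
  have hB : Bex ∈ Gex := Subgroup.subset_closure (by simp)
  have : EG (m*(Real.sqrt 2 - 1)+n) m = Aex ^ m * Bex ^ n := by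
    rw [Aex_eq, Bex_eq, EG_zpow, EG_zpow, EG_mul]
    norm_num
  rw [this]
  exact mul_mem (zpow_mem hA m) (zpow_mem hB n)

lemma Gex_mem (M : Matrix.GeneralLinearGroup (Fin 4) ℝ) (h : M ∈ Gex) :
    ∃ m n : ℤ, M = EG ((m:ℝ)*(Real.sqrt 2 - 1)+n) m := by
  induction h using Subgroup.closure_induction with
  | mem x hx =>
      rcases hx with rfl | rfl
      · exact ⟨1, 0, by rw [Aex_eq]; norm_num⟩
      · exact ⟨0, 1, by rw [Bex_eq]; norm_num⟩
  | one => exact ⟨0, 0, by rw [← EG_one]; norm_num⟩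
  | mul x y _ _ hx hy =>
      obtain ⟨m, n, rfl⟩ := hx
      obtain ⟨m', n', rfl⟩ := hy
      exact ⟨m + m', n + n', by rw [EG_mul]; push_cast; ring_nf⟩
  | inv x _ hx =>
      obtain ⟨m, n, rfl⟩ := hx
      exact ⟨-m, -n, by rw [EG_inv]; push_cast; ring_nf⟩

lemma Em_mulVec (a b : ℝ) : (Em a b).mulVec ![1,1,0,0] = ![1,1,0,a+b] := by
  ext i
  fin_cases i <;>
    simp [Em, Matrix.mulVec, dotProduct, Fin.sum_univ_succ]


lemma sqrt3_ne (m n : ℤ) : (m:ℝ) * Real.sqrt 2 + n ≠ Real.sqrt 3 := by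
  intro h
  have h2 : Real.sqrt 2 * Real.sqrt 2 = 2 := Real.mul_self_sqrt (by norm_num)
  have h3 : Real.sqrt 3 * Real.sqrt 3 = 3 := Real.mul_self_sqrt (by norm_num)
  have hsq : (2*m*n : ℝ) * Real.sqrt 2 = 3 - 2*m^2 - n^2 := by
    have := congrArg (fun x => x * x) h
    nlinarith [this]
  by_cases hmn : (m:ℝ)*n = 0
  · rcases mul_eq_zero.1 hmn with hm | hn
    · have hm0 : m = 0 := by exact_mod_cast hm
      subst hm0
      have : Real.sqrt 3 = (n:ℝ) := by simpa using h.symm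
      exact (Nat.Prime.irrational_sqrt (by norm_num : Nat.Prime 3)) ⟨(n:ℚ), by push_cast [this]; norm_num⟩
    · have hn0 : n = 0 := by exact_mod_cast hn
      subst hn0
      norm_num at hsq
      have : (0:ℤ) = 3 - 2*m^2 := by exact_mod_cast hsq
      omega
  · have hmn' : (2*(m:ℝ)*n) ≠ 0 := by
      intro hz
      apply hmn
      have : (2:ℝ) ≠ 0 := by norm_num
      rcases mul_eq_zero.1 hz with h' | h'
      · rcases mul_eq_zero.1 h' with h'' | h''
        · exact absurd h'' this
        · simp [h'']
      · simp [h']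
    have hd : Real.sqrt 2 = (3 - 2*(m:ℝ)^2 - n^2) / (2*m*n) := by
      rw [eq_div_iff hmn']
      linear_combination hsq
    have : Real.sqrt 2 = ((((3 - 2*m^2 - n^2 : ℤ) : ℚ) / ((2*m*n : ℤ) : ℚ) : ℚ) : ℝ) := by
      push_cast
      exact hd
    exact irrational_sqrt_two ⟨_, this.symm⟩


/-- coefficients of (√2-1)^(k+1) = (ab k).1 + (ab k).2 * √2 -/
def ab : ℕ → ℤ × ℤ
  | 0 => (-1, 1)
  | (k+1) => (2*(ab k).2 - (ab k).1, (ab k).1 - (ab k).2)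

lemma ab_val (k : ℕ) :
    ((ab k).1 : ℝ) + (ab k).2 * Real.sqrt 2 = (Real.sqrt 2 - 1)^(k+1) := by
  have h2 : Real.sqrt 2 * Real.sqrt 2 = 2 := Real.mul_self_sqrt (by norm_num)
  induction k with
  | zero => simp [ab]; ring
  | succ k ih =>
      rw [pow_succ, ← ih]
      show ((ab (k+1)).1 : ℝ) + _ = _
      simp only [ab]
      push_cast
      linear_combination (-(ab k).2 : ℝ) * h2

lemma ab_sign (k : ℕ) :
    (Even k → (ab k).1 ≤ -1 ∧ 1 ≤ (ab k).2) ∧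
    (Odd k → 1 ≤ (ab k).1 ∧ (ab k).2 ≤ -1) := by
  induction k with
  | zero => simp [ab]
  | succ k ih =>
      rcases Nat.even_or_odd k with hk | hk
      · have h := ih.1 hk
        constructor
        · intro h'
          exact absurd h' (by simp [Nat.even_add_one, hk])
        · intro _
          simp only [ab]
          omega
      · have h := ih.2 hk
        constructor
        · intro _
          simp only [ab]
          omega
        · intro h'
          rw [Nat.odd_add_one] at h'
          exact absurd hk (by simpa using h')

lemma ab_b_ne (k : ℕ) : (ab k).2 ≠ 0 := by
  rcases Nat.even_or_odd k with hk | hk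
  · have := (ab_sign k).1 hk; omega
  · have := (ab_sign k).2 hk; omega

def cseq (k : ℕ) : ℝ := (Real.sqrt 2 - 1)^(k+1)

lemma sqrt2_gt_one : (1:ℝ) < Real.sqrt 2 := by
  have := Real.lt_sqrt (x := 1) (y := 2) (by norm_num)
  rw [this]; norm_num

lemma sqrt2_lt_two : Real.sqrt 2 < 2 := by
  have h : Real.sqrt 2 < Real.sqrt 4 := by
    apply Real.sqrt_lt_sqrt <;> norm_num
  have : Real.sqrt 4 = 2 := by
    rw [show (4:ℝ) = 2^2 by norm_num, Real.sqrt_sq] <;> norm_num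
  linarith

lemma cseq_pos (k : ℕ) : 0 < cseq k := pow_pos (by linarith [sqrt2_gt_one]) _

lemma cseq_le (k : ℕ) : cseq k ≤ Real.sqrt 2 - 1 := by
  have h0 : 0 ≤ Real.sqrt 2 - 1 := by linarith [sqrt2_gt_one]
  have h1 : Real.sqrt 2 - 1 ≤ 1 := by linarith [sqrt2_lt_two]
  simpa [cseq] using pow_le_pow_of_le_one h0 h1 (by omega : 1 ≤ k+1)

lemma cseq_tendsto : Tendsto cseq atTop (𝓝 0) := by
  have h0 : 0 ≤ Real.sqrt 2 - 1 := by linarith [sqrt2_gt_one]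
  have h1 : Real.sqrt 2 - 1 < 1 := by linarith [sqrt2_lt_two]
  have := tendsto_pow_atTop_nhds_zero_of_lt_one h0 h1
  exact this.comp (tendsto_add_atTop_nat 1)

def tseq (k : ℕ) : ℤ := ⌊Real.sqrt 3 / cseq k⌋

lemma tseq_mul_le (k : ℕ) : (tseq k : ℝ) * cseq k ≤ Real.sqrt 3 := by
  have := Int.floor_le (Real.sqrt 3 / cseq k)
  calc (tseq k : ℝ) * cseq k ≤ (Real.sqrt 3 / cseq k) * cseq k :=
        mul_le_mul_of_nonneg_right this (cseq_pos k).le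
    _ = Real.sqrt 3 := div_mul_cancel₀ _ (cseq_pos k).ne'
  
lemma lt_tseq_mul (k : ℕ) : Real.sqrt 3 - cseq k < (tseq k : ℝ) * cseq k := by
  have h := Int.lt_floor_add_one (Real.sqrt 3 / cseq k)
  have hc := cseq_pos k
  have h2 := (div_lt_iff₀ hc).1 h
  simp only [tseq]
  nlinarith [h2]

lemma sqrt3_pos : 0 < Real.sqrt 3 := Real.sqrt_pos.2 (by norm_num)

lemma tseq_pos (k : ℕ) : 1 ≤ tseq k := by
  rw [tseq, Int.le_floor]
  rw [le_div_iff₀ (cseq_pos k)]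
  have h1 : Real.sqrt 2 - 1 ≤ 1 := by linarith [sqrt2_lt_two]
  have : (1:ℝ) ≤ Real.sqrt 3 := by
    rw [show (1:ℝ) = Real.sqrt 1 by simp]
    exact Real.sqrt_le_sqrt (by norm_num)
  push_cast
  calc (1:ℝ) * cseq k ≤ 1 := by simpa using (cseq_le k).trans h1
    _ ≤ Real.sqrt 3 := this


def mseq (k : ℕ) : ℤ := tseq k * (ab k).2
def nseq (k : ℕ) : ℤ := tseq k * (ab k).1

lemma mn_val (k : ℕ) : (mseq k : ℝ) * Real.sqrt 2 + nseq k = tseq k * cseq k := by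
  have := ab_val k
  simp only [mseq, nseq, cseq]
  push_cast
  rw [← this]
  ring

def Bseq (k : ℕ) : Matrix.GeneralLinearGroup (Fin 4) ℝ :=
  EG ((mseq k : ℝ) * (Real.sqrt 2 - 1) + nseq k) (mseq k)

lemma Bseq_mem (k : ℕ) : Bseq k ∈ Gex := mem_Gex _ _

lemma Bseq_mulVec (k : ℕ) :
    ((Bseq k : Matrix.GeneralLinearGroup (Fin 4) ℝ) : Matrix (Fin 4) (Fin 4) ℝ).mulVec ![1,1,0,0]
      = ![1, 1, 0, (tseq k : ℝ) * cseq k] := by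
  rw [show ((Bseq k : Matrix.GeneralLinearGroup (Fin 4) ℝ) : Matrix (Fin 4) (Fin 4) ℝ)
      = Em ((mseq k : ℝ) * (Real.sqrt 2 - 1) + nseq k) (mseq k) from rfl, Em_mulVec]
  have : ((mseq k : ℝ) * (Real.sqrt 2 - 1) + nseq k) + mseq k = (tseq k : ℝ) * cseq k := by
    rw [← mn_val k]; ring
  rw [this]

lemma tc_tendsto : Tendsto (fun k => (tseq k : ℝ) * cseq k) atTop (𝓝 (Real.sqrt 3)) := by
  have hlo : Tendsto (fun k => Real.sqrt 3 - cseq k) atTop (𝓝 (Real.sqrt 3)) := by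
    simpa using tendsto_const_nhds.sub cseq_tendsto
  exact tendsto_of_tendsto_of_tendsto_of_le_of_le hlo tendsto_const_nhds
    (fun k => (lt_tseq_mul k).le) (fun k => tseq_mul_le k)

lemma Bseq_tendsto :
    Tendsto (fun k => ((Bseq k : Matrix.GeneralLinearGroup (Fin 4) ℝ) :
        Matrix (Fin 4) (Fin 4) ℝ).mulVec ![1,1,0,0]) atTop (𝓝 ![1, 1, 0, Real.sqrt 3]) := by
  simp only [Bseq_mulVec]
  rw [tendsto_pi_nhds]
  intro i
  fin_cases i
  · simpa using tendsto_const_nhds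
  · simpa using tendsto_const_nhds
  · simpa using tendsto_const_nhds
  · simpa [Matrix.cons_val_three] using tc_tendsto


/-- Let `G` be the subgroup of `GL(4, ℝ)` generated by `A` and `B` above, `u = (1,1,0,0)` and
`v = (1,1,0,√3)`. Then (i) `v ∈ closure(G(u)) \ G(u)`; (ii) there is an unbounded sequence
`(B_m)` in `G` with `lim B_m u = v`. -/
theorem example_unbounded_sequence :
    (![1, 1, 0, Real.sqrt 3] ∈ closure {w : Fin 4 → ℝ |
        ∃ M ∈ Gex, (M : Matrix (Fin 4) (Fin 4) ℝ).mulVec ![1, 1, 0, 0] = w} ∧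
      ![1, 1, 0, Real.sqrt 3] ∉ {w : Fin 4 → ℝ |
        ∃ M ∈ Gex, (M : Matrix (Fin 4) (Fin 4) ℝ).mulVec ![1, 1, 0, 0] = w}) ∧
    ∃ B : ℕ → Matrix.GeneralLinearGroup (Fin 4) ℝ,
      (∀ m, B m ∈ Gex) ∧
      (¬ ∃ C : ℝ, ∀ m, ∀ i j : Fin 4, ‖(B m : Matrix (Fin 4) (Fin 4) ℝ) i j‖ ≤ C) ∧
      Tendsto (fun m => (B m : Matrix (Fin 4) (Fin 4) ℝ).mulVec ![1, 1, 0, 0]) atTop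
        (𝓝 ![1, 1, 0, Real.sqrt 3]) := by
  refine ⟨⟨?_, ?_⟩, Bseq, Bseq_mem, ?_, Bseq_tendsto⟩
  · exact mem_closure_of_tendsto Bseq_tendsto
      (Eventually.of_forall fun k => ⟨Bseq k, Bseq_mem k, rfl⟩)
  · rintro ⟨M, hM, hMu⟩
    obtain ⟨m, n, rfl⟩ := Gex_mem M hM
    rw [EG_coe, Em_mulVec] at hMu
    have h3 := congrFun hMu 3
    simp only [Matrix.cons_val_three, Matrix.head_cons, Matrix.tail_cons] at h3
    apply sqrt3_ne m n
    push_cast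
    linear_combination h3
  · rintro ⟨C, hC⟩
    have hC1 : (1:ℝ) ≤ C := by
      have := hC 0 0 0
      rw [show ((Bseq 0 : Matrix.GeneralLinearGroup (Fin 4) ℝ) :
          Matrix (Fin 4) (Fin 4) ℝ) 0 0 = 1 from rfl] at this
      simpa using this
    have hden : (0:ℝ) < C + Real.sqrt 3 + 1 := by linarith [sqrt3_pos]
    obtain ⟨k, hk⟩ : ∃ k, cseq k * (C + Real.sqrt 3 + 1) < Real.sqrt 3 := by
      have : ∀ᶠ k in atTop, cseq k < Real.sqrt 3 / (C + Real.sqrt 3 + 1) := by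
        apply cseq_tendsto.eventually_lt_const
        positivity
      obtain ⟨k, hk⟩ := this.exists
      exact ⟨k, by rwa [← lt_div_iff₀ hden]⟩
    -- entry (3,0) of Bseq k is m(√2-1)+n = t*c - m
    have hentry := hC k 3 0
    rw [show ((Bseq k : Matrix.GeneralLinearGroup (Fin 4) ℝ) :
        Matrix (Fin 4) (Fin 4) ℝ) 3 0 = (mseq k : ℝ) * (Real.sqrt 2 - 1) + nseq k from rfl,
      Real.norm_eq_abs] at hentry
    have hrel : (mseq k : ℝ) * (Real.sqrt 2 - 1) + nseq k = (tseq k : ℝ) * cseq k - mseq k := by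
      rw [← mn_val k]; ring
    rw [hrel] at hentry
    have htc_le := tseq_mul_le k
    have htc_lt := lt_tseq_mul k
    have hcpos := cseq_pos k
    have ht1 := tseq_pos k
    -- |mseq k| ≥ tseq k
    have habs : (tseq k : ℝ) ≤ |(mseq k : ℝ)| := by
      have h1 : tseq k ≤ |mseq k| := by
        rw [mseq, abs_mul]
        have hb : 1 ≤ |(ab k).2| := Int.one_le_abs (ab_b_ne k)
        calc tseq k = tseq k * 1 := by ring
          _ ≤ |tseq k| * |(ab k).2| := by
              apply mul_le_mul _ hb one_pos.le (abs_nonneg _)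
              exact le_abs_self _
      exact_mod_cast h1
    have hm_le : |(mseq k : ℝ)| ≤ C + Real.sqrt 3 := by
      have h1 : |(mseq k : ℝ)| ≤ |(tseq k : ℝ) * cseq k - mseq k| + |(tseq k : ℝ) * cseq k| := by
        have := abs_sub_abs_le_abs_sub ((mseq k : ℝ)) ((tseq k : ℝ) * cseq k)
        have h2 := abs_sub_comm ((mseq k : ℝ)) ((tseq k : ℝ) * cseq k)
        calc |(mseq k : ℝ)| ≤ |(mseq k : ℝ) - (tseq k : ℝ) * cseq k| + |(tseq k : ℝ) * cseq k| := by
              have := abs_add_le ((mseq k : ℝ) - (tseq k : ℝ) * cseq k) ((tseq k : ℝ) * cseq k)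
              simpa using this
          _ = |(tseq k : ℝ) * cseq k - mseq k| + |(tseq k : ℝ) * cseq k| := by rw [abs_sub_comm]
      have h3 : |(tseq k : ℝ) * cseq k| ≤ Real.sqrt 3 := by
        rw [abs_of_pos (by positivity)]
        exact htc_le
      linarith
    -- tseq k ≤ C + √3, but also √3 < (tseq k + 1) * cseq k ≤ (C + √3 + 1) cseq k < √3
    have ht_le : (tseq k : ℝ) ≤ C + Real.sqrt 3 := le_trans habs hm_le
    nlinarith [htc_lt, hcpos, ht_le, hk, htc_le]

end
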